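/- If m > 1 and z = x + iy is a complex number satisfying sin(mπz) = -m·sin(πz), then |y| ≤ log(2m+1)/(π(m-1)). -/

import Mathlib

open Complex Real

lemma sin_abs_bounds (w : ℂ) :
    (Real.exp |w.im| - Real.exp (-|w.im|)) / 2 ≤ ‖Complex.sin w‖ ∧
    ‖Complex.sin w‖ ≤ (Real.exp |w.im| + Real.exp (-|w.im|)) / 2 := by
  have hsin : Complex.sin w = ((Complex.exp (-w * I) - Complex.exp (w * I)) * I) / 2 := rfl
  have h1 : ‖Complex.exp (-w * I)‖ = Real.exp w.im := by
    rw [Complex.norm_exp]; congr 1; simp [Complex.mul_re]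
  have h2 : ‖Complex.exp (w * I)‖ = Real.exp (-w.im) := by
    rw [Complex.norm_exp]; congr 1; simp [Complex.mul_re]
  have habs : ‖Complex.sin w‖
      = ‖Complex.exp (-w * I) - Complex.exp (w * I)‖ / 2 := by
    rw [hsin]; simp
  constructor
  · rw [habs]
    have key : Real.exp |w.im| - Real.exp (-|w.im|)
        ≤ ‖Complex.exp (-w * I) - Complex.exp (w * I)‖ := by
      have htri := norm_sub_norm_le (Complex.exp (-w * I)) (Complex.exp (w * I))
      have htri' := norm_sub_norm_le (Complex.exp (w * I)) (Complex.exp (-w * I))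
      rw [h1, h2] at htri htri'
      rcases abs_cases w.im with ⟨he, _⟩ | ⟨he, _⟩
      · rw [he]; exact htri
      · rw [he, neg_neg]
        calc Real.exp (-w.im) - Real.exp w.im
            ≤ ‖Complex.exp (w * I) - Complex.exp (-w * I)‖ := htri'
          _ = ‖Complex.exp (-w * I) - Complex.exp (w * I)‖ := norm_sub_rev _ _
    linarith
  · rw [habs]
    have htri := norm_sub_le (Complex.exp (-w * I)) (Complex.exp (w * I))
    rw [h1, h2] at htri
    rcases abs_cases w.im with ⟨he, _⟩ | ⟨he, _⟩
    · rw [he]; linarith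
    · rw [he, neg_neg]; linarith
  
theorem imag_bound_even (m : ℝ) (hm : 1 < m) (z : ℂ)
    (hz : Complex.sin (m * Real.pi * z) = -(m * Complex.sin (Real.pi * z))) :
    |z.im| ≤ Real.log (2 * m + 1) / (Real.pi * (m - 1)) := by
  set t := |z.im| with ht
  have ht0 : 0 ≤ t := abs_nonneg _
  have hpi : (0:ℝ) < Real.pi := Real.pi_pos
  have hm0 : (0:ℝ) < m := by linarith
  have him1 : ((m : ℂ) * (Real.pi : ℂ) * z).im = m * Real.pi * z.im := by
    simp [Complex.mul_im]
  have him2 : ((Real.pi : ℂ) * z).im = Real.pi * z.im := by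
    simp [Complex.mul_im]
  have habs1 : |((m : ℂ) * (Real.pi : ℂ) * z).im| = m * Real.pi * t := by
    rw [him1, abs_mul, _root_.abs_of_nonneg (by positivity : (0:ℝ) ≤ m * Real.pi)]
  have habs2 : |((Real.pi : ℂ) * z).im| = Real.pi * t := by
    rw [him2, abs_mul, _root_.abs_of_nonneg hpi.le]
  have hlow := (sin_abs_bounds ((m : ℂ) * (Real.pi : ℂ) * z)).1
  have hup := (sin_abs_bounds ((Real.pi : ℂ) * z)).2
  rw [habs1] at hlow
  rw [habs2] at hup
  have heq : ‖Complex.sin ((m : ℂ) * (Real.pi : ℂ) * z)‖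
      = m * ‖Complex.sin ((Real.pi : ℂ) * z)‖ := by
    rw [hz, norm_neg, norm_mul]
    rw [Complex.norm_real, Real.norm_eq_abs, _root_.abs_of_pos hm0]
  rw [heq] at hlow
  have hA : Real.exp (m * Real.pi * t) ≤ (2 * m + 1) * Real.exp (Real.pi * t) := by
    have h1 : Real.exp (-(Real.pi * t)) ≤ Real.exp (Real.pi * t) :=
      Real.exp_le_exp.mpr (by nlinarith)
    have h2 : Real.exp (-(m * Real.pi * t)) ≤ 1 :=
      Real.exp_le_one_iff.mpr (neg_nonpos.mpr (by positivity))
    have h3 : (1:ℝ) ≤ Real.exp (Real.pi * t) := Real.one_le_exp (by positivity)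
    nlinarith [hlow, hup, Real.exp_pos (Real.pi * t)]
  have hB : Real.exp ((m - 1) * Real.pi * t) ≤ 2 * m + 1 := by
    have hmul : Real.exp ((m - 1) * Real.pi * t) * Real.exp (Real.pi * t)
        = Real.exp (m * Real.pi * t) := by
      rw [← Real.exp_add]; ring_nf
    have hep := Real.exp_pos (Real.pi * t)
    nlinarith [hA]
  have hC : (m - 1) * Real.pi * t ≤ Real.log (2 * m + 1) := by
    have := Real.log_le_log (Real.exp_pos _) hB
    rwa [Real.log_exp] at this
  rw [le_div_iff₀ (mul_pos hpi (by linarith : (0:ℝ) < m - 1))]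
  linarith [hC]
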